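/- Let I = (-1,1) and let w ∈ L^∞(I) satisfy the strong nondegeneracy property: there exist C > 0 and ε₀ > 0 such that |{x ∈ I : |w(x)+10| ≤ ε}| ≤ C ε for all 0 < ε < ε₀. Let β be the Heaviside-type graph with values β_i for u < -10, [β_i, β_w] at u = -10, and β_w for u > -10. Then for any q ∈ [1,∞) there is C̃ > 0 such that for all ŵ ∈ L^∞(I) and measurable selections z(x) ∈ β(w(x)), ẑ(x) ∈ β(ŵ(x)) a.e., one has ‖z - ẑ‖_{L^q(I)} ≤ (β_w - β_i) · min{ C̃ ‖w - ŵ‖_{L^∞(I)}^{1/q}, 2^{1/q} }. -/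

import Mathlib

open MeasureTheory Set

/-- The Budyko co-albedo graph. -/
def budykoGraph (βi βw : ℝ) : ℝ → Set ℝ := fun u =>
  if u < -10 then {βi} else if u = -10 then Set.Icc βi βw else {βw}

lemma budyko_mem_Icc {βi βw u z : ℝ} (h : βi ≤ βw)
    (hz : z ∈ budykoGraph βi βw u) : z ∈ Set.Icc βi βw := by
  unfold budykoGraph at hz
  split_ifs at hz with h1 h2
  · simp only [Set.mem_singleton_iff] at hz; rw [hz]; exact ⟨le_refl _, h⟩
  · exact hz
  · simp only [Set.mem_singleton_iff] at hz; rw [hz]; exact ⟨h, le_refl _⟩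

lemma budyko_eq {βi βw u uh δ z zh : ℝ}
    (hz : z ∈ budykoGraph βi βw u) (hzh : zh ∈ budykoGraph βi βw uh)
    (hd : |u - uh| ≤ δ) (hu : δ < |u + 10|) : z = zh := by
  have hab := abs_le.mp hd
  have h0 : (0:ℝ) ≤ δ := le_trans (abs_nonneg _) hd
  rcases le_or_gt (u + 10) 0 with h | h
  · have habs : |u + 10| = -(u + 10) := abs_of_nonpos h
    have hu' : u + 10 < -δ := by rw [habs] at hu; linarith
    have h1 : u < -10 := by linarith
    have h2 : uh < -10 := by linarith [hab.1]
    simp only [budykoGraph, if_pos h1, if_pos h2, Set.mem_singleton_iff] at hz hzh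
    rw [hz, hzh]
  · have habs : |u + 10| = u + 10 := abs_of_pos h
    have hu' : δ < u + 10 := by rw [habs] at hu; exact hu
    have h1 : -10 < u := by linarith
    have h2 : -10 < uh := by linarith [hab.2]
    simp only [budykoGraph, if_neg h1.asymm, if_neg h1.ne', if_neg h2.asymm,
      if_neg h2.ne', Set.mem_singleton_iff] at hz hzh
    rw [hz, hzh]

/-- If w ∈ L^∞(I), I = (-1,1), satisfies the strong nondegeneracy property
at level -10, then for any q ∈ [1,∞) there is C̃ > 0 such that for any
wh ∈ L^∞(I) and a.e. selections z ∈ β(w), zh ∈ β(wh) of the Heaviside-type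
Budyko graph,
‖z - zh‖_{L^q} ≤ (βw - βi) min{C̃ ‖w - wh‖_∞^{1/q}, 2^{1/q}}. -/
theorem budyko_strong_nondegeneracy_Lq_estimate
    (βi βw : ℝ) (hβi : 0 < βi) (hβ : βi < βw) (hβw : βw < 1)
    (w : ℝ → ℝ) (hw : MemLp w ⊤ (volume.restrict (Ioo (-1 : ℝ) 1)))
    (C ε₀ : ℝ) (hC : 0 < C) (hε₀ : 0 < ε₀)
    (hnd : ∀ ε : ℝ, 0 < ε → ε < ε₀ →
      (volume {x ∈ Ioo (-1 : ℝ) 1 | |w x + 10| ≤ ε}).toReal ≤ C * ε)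
    (q : ℝ) (hq : 1 ≤ q) :
    ∃ C' > 0, ∀ wh z zh : ℝ → ℝ,
      MemLp wh ⊤ (volume.restrict (Ioo (-1 : ℝ) 1)) →
      (∀ᵐ x ∂(volume.restrict (Ioo (-1 : ℝ) 1)), z x ∈ budykoGraph βi βw (w x)) →
      (∀ᵐ x ∂(volume.restrict (Ioo (-1 : ℝ) 1)), zh x ∈ budykoGraph βi βw (wh x)) →
      (∫ x in Ioo (-1 : ℝ) 1, |z x - zh x| ^ q) ^ (1 / q)
        ≤ (βw - βi) *
          min (C' * ((eLpNorm (fun x => w x - wh x) ⊤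
              (volume.restrict (Ioo (-1 : ℝ) 1))).toReal) ^ (1 / q))
            ((2 : ℝ) ^ (1 / q)) := by
  have hq0 : (0:ℝ) < q := lt_of_lt_of_le one_pos hq
  have hq0' : (0:ℝ) < 1 / q := by positivity
  have hβ' : (0:ℝ) ≤ βw - βi := by linarith
  set μ := volume.restrict (Ioo (-1 : ℝ) 1) with hμdef
  set K := max C (2 / ε₀) with hKdef
  have hK0 : 0 < K := lt_max_of_lt_left hC
  refine ⟨K ^ (1/q), Real.rpow_pos_of_pos hK0 _, ?_⟩
  intro wh z zh hwh hz hzh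
  set δ := (eLpNorm (fun x => w x - wh x) ⊤ μ).toReal with hδdef
  have hδ0 : (0:ℝ) ≤ δ := ENNReal.toReal_nonneg
  -- the RHS is nonneg
  have hRHSnn : 0 ≤ (βw - βi) *
      min (K ^ (1/q) * δ ^ (1/q)) ((2:ℝ) ^ (1/q)) := by
    apply mul_nonneg hβ'
    exact le_min (by positivity) (by positivity)
  -- the bad set
  set S := {x : ℝ | |w x + 10| ≤ δ} with hSdef
  set T := toMeasurable μ S with hTdef
  have hTm : MeasurableSet T := measurableSet_toMeasurable μ S
  have hμT : μ T = μ S := measure_toMeasurable S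
  have hμS2 : μ S ≤ ENNReal.ofReal 2 := by
    calc μ S ≤ μ univ := measure_mono (subset_univ S)
      _ = volume (Ioo (-1:ℝ) 1) := by rw [hμdef, Measure.restrict_apply_univ]
      _ = ENNReal.ofReal 2 := by rw [Real.volume_Ioo]; norm_num
  have hμSfin : μ S ≠ ⊤ := ne_top_of_le_ne_top ENNReal.ofReal_ne_top hμS2
  set m := (μ S).toReal with hmdef
  have hmnn : (0:ℝ) ≤ m := ENNReal.toReal_nonneg
  have hm2 : m ≤ 2 := by
    have := ENNReal.toReal_mono ENNReal.ofReal_ne_top hμS2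
    rwa [ENNReal.toReal_ofReal (by norm_num : (0:ℝ) ≤ 2)] at this
  -- measure of S via nondegeneracy
  have hmS : ∀ ε : ℝ, δ ≤ ε → 0 < ε → ε < ε₀ → m ≤ C * ε := by
    intro ε hδε hε hε'
    have hsub : S ∩ Ioo (-1:ℝ) 1 ⊆ {x ∈ Ioo (-1:ℝ) 1 | |w x + 10| ≤ ε} := by
      rintro x ⟨hx1, hx2⟩
      exact ⟨hx2, le_trans hx1 hδε⟩
    have h1 : μ S = volume (S ∩ Ioo (-1:ℝ) 1) := by
      rw [hμdef, Measure.restrict_apply' measurableSet_Ioo]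
    have h2 : volume (S ∩ Ioo (-1:ℝ) 1) ≤ volume {x ∈ Ioo (-1:ℝ) 1 | |w x + 10| ≤ ε} :=
      measure_mono hsub
    have hfin2 : volume {x ∈ Ioo (-1:ℝ) 1 | |w x + 10| ≤ ε} ≠ ⊤ :=
      ne_top_of_le_ne_top (by rw [Real.volume_Ioo]; exact ENNReal.ofReal_ne_top)
        (measure_mono fun x hx => hx.1)
    have h3 : m ≤ (volume {x ∈ Ioo (-1:ℝ) 1 | |w x + 10| ≤ ε}).toReal := by
      rw [hmdef, h1]
      exact ENNReal.toReal_mono hfin2 h2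
    exact le_trans h3 (hnd ε hε hε')
  have hmK : m ≤ K * δ := by
    rcases le_or_gt ε₀ δ with h | h
    · calc m ≤ 2 := hm2
        _ = (2 / ε₀) * ε₀ := by field_simp
        _ ≤ (2 / ε₀) * δ := by
            apply mul_le_mul_of_nonneg_left h (by positivity)
        _ ≤ K * δ := mul_le_mul_of_nonneg_right (le_max_right _ _) hδ0
    · rcases eq_or_lt_of_le hδ0 with h0 | h0
      · -- δ = 0
        have hm0 : m ≤ 0 := by
          by_contra hcon
          push_neg at hcon
          set ε := min (m / (2 * C)) (ε₀ / 2) with hεdef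
          have hε : 0 < ε := lt_min (by positivity) (by positivity)
          have h1 := hmS ε (by rw [← h0]; exact hε.le) hε
            (lt_of_le_of_lt (min_le_right _ _) (by linarith))
          have h2 : C * ε ≤ C * (m / (2 * C)) :=
            mul_le_mul_of_nonneg_left (min_le_left _ _) hC.le
          have h3 : C * (m / (2 * C)) = m / 2 := by field_simp
          rw [h3] at h2
          linarith
        calc m ≤ 0 := hm0
          _ = K * δ := by rw [← h0, mul_zero]
      · exact le_trans (hmS δ le_rfl h0 h)
          (mul_le_mul_of_nonneg_right (le_max_left _ _) hδ0)
  -- a.e. bound on |w - wh|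
  have hae : ∀ᵐ x ∂μ, |w x - wh x| ≤ δ := by
    have hfin : eLpNormEssSup (fun x => w x - wh x) μ ≠ ⊤ := by
      have h1 := (hw.sub hwh).2
      rw [eLpNorm_exponent_top] at h1
      exact h1.ne
    filter_upwards [ae_le_eLpNormEssSup (f := fun x => w x - wh x) (μ := μ)] with x hx
    have h2 := ENNReal.toReal_mono hfin hx
    rw [toReal_enorm, Real.norm_eq_abs] at h2
    rw [hδdef, eLpNorm_exponent_top]
    exact h2
  -- a.e. pointwise bound by indicator
  have hle : (fun x => |z x - zh x| ^ q) ≤ᵐ[μ]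
      fun x => T.indicator (fun _ => (βw - βi) ^ q) x := by
    filter_upwards [hz, hzh, hae] with x hzx hzhx hwx
    by_cases hxT : x ∈ T
    · rw [indicator_of_mem hxT]
      apply Real.rpow_le_rpow (abs_nonneg _) _ hq0.le
      have h1 := budyko_mem_Icc hβ.le hzx
      have h2 := budyko_mem_Icc hβ.le hzhx
      rw [abs_le]
      constructor <;> [linarith [h1.1, h2.2]; linarith [h1.2, h2.1]]
    · have hxS : x ∉ S := fun hmem => hxT (subset_toMeasurable μ S hmem)
      have h1 : δ < |w x + 10| := not_le.mp hxS
      have h2 : z x = zh x := budyko_eq hzx hzhx hwx h1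
      rw [indicator_of_notMem hxT, h2, sub_self, abs_zero,
        Real.zero_rpow hq0.ne']
  by_cases hint : Integrable (fun x => |z x - zh x| ^ q) μ
  · -- integrable case
    have hgint : Integrable (fun x => T.indicator (fun _ => (βw - βi) ^ q) x) μ := by
      rw [integrable_indicator_iff hTm]
      refine integrableOn_const ?_
      rw [hμT]
      exact (lt_of_le_of_lt hμS2 ENNReal.ofReal_lt_top).ne
    have hI : (∫ x, |z x - zh x| ^ q ∂μ) ≤ (βw - βi) ^ q * m := by
      calc (∫ x, |z x - zh x| ^ q ∂μ)
          ≤ ∫ x, T.indicator (fun _ => (βw - βi) ^ q) x ∂μ :=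
            integral_mono_ae hint hgint hle
        _ = (μ T).toReal • ((βw - βi) ^ q) := integral_indicator_const _ hTm
        _ = (βw - βi) ^ q * m := by rw [hμT, smul_eq_mul, mul_comm]
    have hInn : (0:ℝ) ≤ ∫ x, |z x - zh x| ^ q ∂μ :=
      integral_nonneg fun x => Real.rpow_nonneg (abs_nonneg _) q
    calc (∫ x in Ioo (-1:ℝ) 1, |z x - zh x| ^ q) ^ (1/q)
        ≤ ((βw - βi) ^ q * m) ^ (1/q) :=
          Real.rpow_le_rpow hInn hI hq0'.le
      _ = (βw - βi) * m ^ (1/q) := by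
          rw [Real.mul_rpow (Real.rpow_nonneg hβ' q) hmnn,
            ← Real.rpow_mul hβ', mul_one_div_cancel hq0.ne', Real.rpow_one]
      _ ≤ (βw - βi) * min (K ^ (1/q) * δ ^ (1/q)) ((2:ℝ) ^ (1/q)) := by
          apply mul_le_mul_of_nonneg_left _ hβ'
          apply le_min
          · rw [← Real.mul_rpow hK0.le hδ0]
            exact Real.rpow_le_rpow hmnn hmK hq0'.le
          · exact Real.rpow_le_rpow hmnn hm2 hq0'.le
  · -- not integrable: the integral is 0
    rw [show (∫ x in Ioo (-1:ℝ) 1, |z x - zh x| ^ q) = ∫ x, |z x - zh x| ^ q ∂μ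
        from rfl,
      integral_undef hint, Real.zero_rpow hq0'.ne']
    exact hRHSnn
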